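/- Let g ≥ 1. For every t ∈ ℤ and every 1 ≤ i ≤ g, the matrices E_i(t) and W_i are symplectic with respect to J, where for 1 ≤ i ≤ g−1, E_i(t) is the 2g×2g identity matrix modified to have entry t in positions (i, i+1) and (2g−i, 2g−i+1), and W_i is the identity modified to have entries W_i(i, i+1) = −1, W_i(i+1, i) = 1, W_i(2g−i, 2g−i+1) = −1, W_i(2g−i+1, 2g−i) = 1 and diagonal entries 0 in positions i, i+1, 2g−i, 2g−i+1; E_g(t) is the identity modified to have entry t in position (g, g+1), and W_g is the identity modified to have W_g(g, g+1) = −1, W_g(g+1, g) = 1 and diagonal entries 0 in positions g, g+1. -/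

import Mathlib

open Polynomial Matrix

/-- The `2g×2g` matrix with `(i, 2g+1−i)` entry `(−1)^{i+1}` (1-indexed) and 0 elsewhere. -/
def Jmat (g : ℕ) : Matrix (Fin (2 * g)) (Fin (2 * g)) ℤ :=
  Matrix.of fun (i j : Fin (2 * g)) =>
    if (i : ℕ) + (j : ℕ) = 2 * g - 1 then (-1 : ℤ) ^ (i : ℕ) else 0

/-- The identity modified to have entry `t` in (1-indexed) positions `(i, i+1)` and
`(2g−i, 2g−i+1)` (these coincide when `i = g`). -/
def Emat (g i : ℕ) (t : ℤ) : Matrix (Fin (2 * g)) (Fin (2 * g)) ℤ :=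
  Matrix.of fun (a b : Fin (2 * g)) =>
    (if (a : ℕ) = (b : ℕ) then 1 else 0) +
      (if ((a : ℕ) + 1 = i ∧ (b : ℕ) + 1 = i + 1) ∨
          ((a : ℕ) + 1 = 2 * g - i ∧ (b : ℕ) + 1 = 2 * g - i + 1) then t else 0)

/-- The identity modified to have (1-indexed) entries `−1` at `(i, i+1)` and `(2g−i, 2g−i+1)`,
`1` at `(i+1, i)` and `(2g−i+1, 2g−i)`, and `0` on the diagonal in positions
`i`, `i+1`, `2g−i`, `2g−i+1`. -/
def Wmat (g i : ℕ) : Matrix (Fin (2 * g)) (Fin (2 * g)) ℤ :=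
  Matrix.of fun (a b : Fin (2 * g)) =>
    if ((a : ℕ) + 1 = i ∧ (b : ℕ) + 1 = i + 1) ∨
        ((a : ℕ) + 1 = 2 * g - i ∧ (b : ℕ) + 1 = 2 * g - i + 1) then -1
    else if ((a : ℕ) + 1 = i + 1 ∧ (b : ℕ) + 1 = i) ∨
        ((a : ℕ) + 1 = 2 * g - i + 1 ∧ (b : ℕ) + 1 = 2 * g - i) then 1
    else if (a : ℕ) = (b : ℕ) ∧ (a : ℕ) + 1 ≠ i ∧ (a : ℕ) + 1 ≠ i + 1 ∧
        (a : ℕ) + 1 ≠ 2 * g - i ∧ (a : ℕ) + 1 ≠ 2 * g - i + 1 then 1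
    else 0

/-! ### Auxiliary lemmas -/

lemma negOnePow_congr {a b : ℕ} (h : a % 2 = b % 2) : (-1:ℤ)^a = (-1)^b := by
  rcases Nat.even_or_odd a with ha | ha
  · have hb : Even b := Nat.even_iff.2 (by rw [← h]; exact Nat.even_iff.1 ha)
    rw [ha.neg_one_pow, hb.neg_one_pow]
  · have hb : Odd b := Nat.odd_iff.2 (by rw [← h]; exact Nat.odd_iff.1 ha)
    rw [ha.neg_one_pow, hb.neg_one_pow]

lemma transpose_std {n : ℕ} (p q : Fin n) (c : ℤ) :
    (Matrix.single p q c)ᵀ = Matrix.single q p c := by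
  ext a b
  simp [Matrix.single, and_comm]

def revF (g : ℕ) (p : Fin (2*g)) : Fin (2*g) := ⟨2*g-1-(p:ℕ), by have := p.isLt; omega⟩

lemma std_mul_J (g : ℕ) (p q : Fin (2*g)) (c : ℤ) :
    Matrix.single p q c * Jmat g = Matrix.single p (revF g q) ((-1)^(q:ℕ) * c) := by
  ext a b
  rw [mul_apply, Finset.sum_eq_single q]
  · have hq := q.isLt; have hb := b.isLt
    by_cases h1 : (p:ℕ) = (a:ℕ)
    · by_cases h2 : (q:ℕ) + (b:ℕ) = 2*g-1
      · have hb2 : 2*g-1-(q:ℕ) = (b:ℕ) := by omega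
        simp [Matrix.single, Jmat, revF, Fin.ext_iff, h1, h2, hb2, mul_comm]
        intro h; omega
      · have hb2 : ¬ (2*g-1-(q:ℕ) = (b:ℕ)) := by omega
        simp [Matrix.single, Jmat, revF, Fin.ext_iff, h1, h2, hb2]
    · simp [Matrix.single, Jmat, revF, Fin.ext_iff, h1]
  · intro x _ hx
    simp [Matrix.single, hx.symm, Jmat]
  · simp

lemma J_mul_std (g : ℕ) (p q : Fin (2*g)) (c : ℤ) :
    Jmat g * Matrix.single p q c = Matrix.single (revF g p) q (-(-1)^(p:ℕ) * c) := by
  ext a b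
  rw [mul_apply, Finset.sum_eq_single p]
  · have hp := p.isLt; have ha := a.isLt
    by_cases h2 : (q:ℕ) = (b:ℕ)
    · by_cases h1 : (a:ℕ) + (p:ℕ) = 2*g-1
      · have ha2 : 2*g-1-(p:ℕ) = (a:ℕ) := by omega
        have hs : ((-1:ℤ))^(a:ℕ) = -(-1)^(p:ℕ) := by
          rw [negOnePow_congr (a := (a:ℕ)) (b := (p:ℕ)+1) (by omega), pow_succ]; ring
        simp [Matrix.single, Jmat, revF, Fin.ext_iff, h1, h2, ha2, hs, mul_comm]
        intro h; omega
      · have ha2 : ¬ (2*g-1-(p:ℕ) = (a:ℕ)) := by omega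
        simp [Matrix.single, Jmat, revF, Fin.ext_iff, h1, h2, ha2]
    · simp [Matrix.single, Jmat, revF, Fin.ext_iff, h2]
  · intro x _ hx
    simp [Matrix.single, hx.symm, Jmat]
  · simp

/-! ### Symplecticity helpers -/

lemma symp_aux (g : ℕ) (A : Matrix (Fin (2*g)) (Fin (2*g)) ℤ)
    (hc : Aᵀ * Jmat g + Jmat g * A = 0) (h2 : Aᵀ * Jmat g * A = 0) :
    (1 + A)ᵀ * Jmat g * (1 + A) = Jmat g := by
  have e : (1 + A)ᵀ * Jmat g * (1 + A)
      = Jmat g + (Aᵀ * Jmat g + Jmat g * A) + Aᵀ * Jmat g * A := by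
    rw [transpose_add, transpose_one]; noncomm_ring
  rw [e, hc, h2, add_zero, add_zero]

lemma symp_aux_sub (g : ℕ) (A : Matrix (Fin (2*g)) (Fin (2*g)) ℤ)
    (hc : Aᵀ * Jmat g + Jmat g * A = 0) (h2 : Aᵀ * Jmat g * A = 0) :
    (1 - A)ᵀ * Jmat g * (1 - A) = Jmat g := by
  have e : (1 - A)ᵀ * Jmat g * (1 - A)
      = Jmat g - (Aᵀ * Jmat g + Jmat g * A) + Aᵀ * Jmat g * A := by
    rw [transpose_sub, transpose_one]; noncomm_ring
  rw [e, hc, h2, sub_zero, add_zero]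

lemma symp_mul (g : ℕ) (X Y : Matrix (Fin (2*g)) (Fin (2*g)) ℤ)
    (hX : Xᵀ * Jmat g * X = Jmat g) (hY : Yᵀ * Jmat g * Y = Jmat g) :
    (X * Y)ᵀ * Jmat g * (X * Y) = Jmat g := by
  rw [transpose_mul]
  calc Yᵀ * Xᵀ * Jmat g * (X * Y) = Yᵀ * (Xᵀ * Jmat g * X) * Y := by noncomm_ring
  _ = Yᵀ * Jmat g * Y := by rw [hX]
  _ = Jmat g := hY

lemma factor_key {R : Type*} [Ring R] (A B D1 D2 : R) (h1 : A*A = 0) (h2 : A*B = D1)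
    (h3 : B*A = D2) (h4 : A*B*A = A) :
    (1 - A) * (1 + B) * (1 - A) = 1 - A + B - D1 - D2 := by
  have e : (1 - A) * (1 + B) * (1 - A)
      = 1 + B - A - A*B - A - B*A + A*A + A*B*A := by noncomm_ring
  rw [e, h4, h1, h2, h3]; abel

/-! ### Core computations: two 2×2 blocks (case `i < g`) -/

section Core4
variable (g : ℕ) (x1 x2 x3 x4 : Fin (2*g))

lemma cc1 (r1 : revF g x1 = x4) (r3 : revF g x3 = x2)
    (s3 : ((-1:ℤ))^(x3:ℕ) = (-1)^(x1:ℕ)) (t : ℤ) :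
    (Matrix.single x1 x2 t + Matrix.single x3 x4 t)ᵀ * Jmat g
      + Jmat g * (Matrix.single x1 x2 t + Matrix.single x3 x4 t) = 0 := by
  simp only [transpose_add, transpose_std, add_mul, mul_add, std_mul_J, J_mul_std, r1, r3, s3]
  ext a b
  simp only [Matrix.add_apply, Matrix.zero_apply, Matrix.single, of_apply]
  split_ifs <;> ring

lemma cc2 (r1 : revF g x1 = x4) (r3 : revF g x3 = x2)
    (n41 : x4 ≠ x1) (n43 : x4 ≠ x3) (n21 : x2 ≠ x1) (n23 : x2 ≠ x3) (t : ℤ) :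
    (Matrix.single x1 x2 t + Matrix.single x3 x4 t)ᵀ * Jmat g
      * (Matrix.single x1 x2 t + Matrix.single x3 x4 t) = 0 := by
  simp only [transpose_add, transpose_std, add_mul, mul_add, std_mul_J, r1, r3]
  simp [Matrix.single_mul_single_of_ne, n41, n43, n21, n23]

lemma cc3 (r2 : revF g x2 = x3) (r4 : revF g x4 = x1)
    (s4 : ((-1:ℤ))^(x4:ℕ) = (-1)^(x2:ℕ)) :
    (Matrix.single x1 x2 (1:ℤ) + Matrix.single x3 x4 1) * Jmat g
      + Jmat g * (Matrix.single x2 x1 (1:ℤ) + Matrix.single x4 x3 1) = 0 := by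
  simp only [add_mul, mul_add, std_mul_J, J_mul_std, r2, r4, s4]
  ext a b
  simp only [Matrix.add_apply, Matrix.zero_apply, Matrix.single, of_apply]
  split_ifs <;> ring

lemma cc4 (r2 : revF g x2 = x3) (r4 : revF g x4 = x1)
    (n32 : x3 ≠ x2) (n34 : x3 ≠ x4) (n12 : x1 ≠ x2) (n14 : x1 ≠ x4) :
    (Matrix.single x1 x2 (1:ℤ) + Matrix.single x3 x4 1) * Jmat g
      * (Matrix.single x2 x1 (1:ℤ) + Matrix.single x4 x3 1) = 0 := by
  simp only [add_mul, mul_add, std_mul_J, r2, r4]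
  simp [Matrix.single_mul_single_of_ne, n32, n34, n12, n14]

lemma core4E (r1 : revF g x1 = x4) (r3 : revF g x3 = x2)
    (s3 : ((-1:ℤ))^(x3:ℕ) = (-1)^(x1:ℕ))
    (n41 : x4 ≠ x1) (n43 : x4 ≠ x3) (n21 : x2 ≠ x1) (n23 : x2 ≠ x3) (t : ℤ) :
    (1 + (Matrix.single x1 x2 t + Matrix.single x3 x4 t))ᵀ * Jmat g
      * (1 + (Matrix.single x1 x2 t + Matrix.single x3 x4 t)) = Jmat g :=
  symp_aux g _ (cc1 g x1 x2 x3 x4 r1 r3 s3 t) (cc2 g x1 x2 x3 x4 r1 r3 n41 n43 n21 n23 t)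

lemma core4W (r1 : revF g x1 = x4) (r2 : revF g x2 = x3) (r3 : revF g x3 = x2)
    (r4 : revF g x4 = x1)
    (s3 : ((-1:ℤ))^(x3:ℕ) = (-1)^(x1:ℕ)) (s4 : ((-1:ℤ))^(x4:ℕ) = (-1)^(x2:ℕ))
    (n12 : x1 ≠ x2) (n13 : x1 ≠ x3) (n14 : x1 ≠ x4)
    (n23 : x2 ≠ x3) (n24 : x2 ≠ x4) (n34 : x3 ≠ x4) :
    (1 - (Matrix.single x1 x2 (1:ℤ) + Matrix.single x3 x4 1)
      + (Matrix.single x2 x1 (1:ℤ) + Matrix.single x4 x3 1)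
      - (Matrix.single x1 x1 (1:ℤ) + Matrix.single x3 x3 1)
      - (Matrix.single x2 x2 (1:ℤ) + Matrix.single x4 x4 1))ᵀ * Jmat g
    * (1 - (Matrix.single x1 x2 (1:ℤ) + Matrix.single x3 x4 1)
      + (Matrix.single x2 x1 (1:ℤ) + Matrix.single x4 x3 1)
      - (Matrix.single x1 x1 (1:ℤ) + Matrix.single x3 x3 1)
      - (Matrix.single x2 x2 (1:ℤ) + Matrix.single x4 x4 1)) = Jmat g := by
  have n21 := n12.symm; have n31 := n13.symm; have n41 := n14.symm
  have n32 := n23.symm; have n42 := n24.symm; have n43 := n34.symm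
  have hAA : (Matrix.single x1 x2 (1:ℤ) + Matrix.single x3 x4 1)
      * (Matrix.single x1 x2 (1:ℤ) + Matrix.single x3 x4 1) = 0 := by
    simp [add_mul, mul_add, Matrix.single_mul_single_of_ne, n21, n23, n41, n43]
  have hAB : (Matrix.single x1 x2 (1:ℤ) + Matrix.single x3 x4 1)
      * (Matrix.single x2 x1 (1:ℤ) + Matrix.single x4 x3 1)
      = Matrix.single x1 x1 (1:ℤ) + Matrix.single x3 x3 1 := by
    simp [add_mul, mul_add, Matrix.single_mul_single_of_ne, Matrix.single_mul_single_same, n24, n42]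
  have hBA : (Matrix.single x2 x1 (1:ℤ) + Matrix.single x4 x3 1)
      * (Matrix.single x1 x2 (1:ℤ) + Matrix.single x3 x4 1)
      = Matrix.single x2 x2 (1:ℤ) + Matrix.single x4 x4 1 := by
    simp [add_mul, mul_add, Matrix.single_mul_single_of_ne, Matrix.single_mul_single_same, n13, n31]
  have hABA : (Matrix.single x1 x2 (1:ℤ) + Matrix.single x3 x4 1)
      * (Matrix.single x2 x1 (1:ℤ) + Matrix.single x4 x3 1)
      * (Matrix.single x1 x2 (1:ℤ) + Matrix.single x3 x4 1)
      = Matrix.single x1 x2 (1:ℤ) + Matrix.single x3 x4 1 := by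
    rw [hAB]
    simp [add_mul, mul_add, Matrix.single_mul_single_of_ne, Matrix.single_mul_single_same, n13, n31]
  have key := factor_key (Matrix.single x1 x2 (1:ℤ) + Matrix.single x3 x4 1)
    (Matrix.single x2 x1 (1:ℤ) + Matrix.single x4 x3 1)
    (Matrix.single x1 x1 (1:ℤ) + Matrix.single x3 x3 1)
    (Matrix.single x2 x2 (1:ℤ) + Matrix.single x4 x4 1) hAA hAB hBA hABA
  rw [← key]
  have hBt : (Matrix.single x2 x1 (1:ℤ) + Matrix.single x4 x3 1)ᵀ
      = Matrix.single x1 x2 (1:ℤ) + Matrix.single x3 x4 1 := by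
    simp [transpose_add, transpose_std]
  have S1 : (1 - (Matrix.single x1 x2 (1:ℤ) + Matrix.single x3 x4 1))ᵀ * Jmat g
      * (1 - (Matrix.single x1 x2 (1:ℤ) + Matrix.single x3 x4 1)) = Jmat g :=
    symp_aux_sub g _ (cc1 g x1 x2 x3 x4 r1 r3 s3 1) (cc2 g x1 x2 x3 x4 r1 r3 n41 n43 n21 n23 1)
  have S2 : (1 + (Matrix.single x2 x1 (1:ℤ) + Matrix.single x4 x3 1))ᵀ * Jmat g
      * (1 + (Matrix.single x2 x1 (1:ℤ) + Matrix.single x4 x3 1)) = Jmat g := by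
    apply symp_aux
    · rw [hBt]; exact cc3 g x1 x2 x3 x4 r2 r4 s4
    · rw [hBt]; exact cc4 g x1 x2 x3 x4 r2 r4 n32 n34 n12 n14
  exact symp_mul g _ _ (symp_mul g _ _ S1 S2) S1

end Core4

/-! ### Core computations: middle 2×2 block (case `i = g`) -/

section Core2
variable (g : ℕ) (x y : Fin (2*g))

lemma dd1 (rx : revF g x = y) (t : ℤ) :
    (Matrix.single x y t)ᵀ * Jmat g + Jmat g * Matrix.single x y t = 0 := by
  simp only [transpose_std, std_mul_J, J_mul_std, rx]
  ext a b
  simp only [Matrix.add_apply, Matrix.zero_apply, Matrix.single, of_apply]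
  split_ifs <;> ring

lemma dd2 (rx : revF g x = y) (nyx : y ≠ x) (t : ℤ) :
    (Matrix.single x y t)ᵀ * Jmat g * Matrix.single x y t = 0 := by
  simp only [transpose_std, std_mul_J, rx]
  simp [Matrix.single_mul_single_of_ne, nyx]

lemma dd3 (ry : revF g y = x) :
    Matrix.single x y (1:ℤ) * Jmat g + Jmat g * Matrix.single y x (1:ℤ) = 0 := by
  simp only [std_mul_J, J_mul_std, ry]
  ext a b
  simp only [Matrix.add_apply, Matrix.zero_apply, Matrix.single, of_apply]
  split_ifs <;> ring

lemma dd4 (ry : revF g y = x) (nxy : x ≠ y) :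
    Matrix.single x y (1:ℤ) * Jmat g * Matrix.single y x (1:ℤ) = 0 := by
  simp only [std_mul_J, ry]
  simp [Matrix.single_mul_single_of_ne, nxy]

lemma core2E (rx : revF g x = y) (nyx : y ≠ x) (t : ℤ) :
    (1 + Matrix.single x y t)ᵀ * Jmat g * (1 + Matrix.single x y t) = Jmat g :=
  symp_aux g _ (dd1 g x y rx t) (dd2 g x y rx nyx t)

lemma core2W (rx : revF g x = y) (ry : revF g y = x) (nxy : x ≠ y) :
    (1 - Matrix.single x y (1:ℤ) + Matrix.single y x (1:ℤ)
      - Matrix.single x x (1:ℤ) - Matrix.single y y (1:ℤ))ᵀ * Jmat g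
    * (1 - Matrix.single x y (1:ℤ) + Matrix.single y x (1:ℤ)
      - Matrix.single x x (1:ℤ) - Matrix.single y y (1:ℤ)) = Jmat g := by
  have nyx := nxy.symm
  have hAA : Matrix.single x y (1:ℤ) * Matrix.single x y (1:ℤ) = 0 := by
    simp [Matrix.single_mul_single_of_ne, nyx]
  have hAB : Matrix.single x y (1:ℤ) * Matrix.single y x (1:ℤ)
      = Matrix.single x x (1:ℤ) := by
    simp [Matrix.single_mul_single_same]
  have hBA : Matrix.single y x (1:ℤ) * Matrix.single x y (1:ℤ)
      = Matrix.single y y (1:ℤ) := by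
    simp [Matrix.single_mul_single_same]
  have hABA : Matrix.single x y (1:ℤ) * Matrix.single y x (1:ℤ) * Matrix.single x y (1:ℤ)
      = Matrix.single x y (1:ℤ) := by
    rw [hAB]; simp [Matrix.single_mul_single_same]
  have key := factor_key (Matrix.single x y (1:ℤ)) (Matrix.single y x (1:ℤ))
    (Matrix.single x x (1:ℤ)) (Matrix.single y y (1:ℤ)) hAA hAB hBA hABA
  rw [← key]
  have hBt : (Matrix.single y x (1:ℤ))ᵀ = Matrix.single x y (1:ℤ) := transpose_std y x 1
  have S1 : (1 - Matrix.single x y (1:ℤ))ᵀ * Jmat g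
      * (1 - Matrix.single x y (1:ℤ)) = Jmat g :=
    symp_aux_sub g _ (dd1 g x y rx 1) (dd2 g x y rx nyx 1)
  have S2 : (1 + Matrix.single y x (1:ℤ))ᵀ * Jmat g
      * (1 + Matrix.single y x (1:ℤ)) = Jmat g := by
    apply symp_aux
    · rw [hBt]; exact dd3 g x y ry
    · rw [hBt]; exact dd4 g x y ry nxy
  exact symp_mul g _ _ (symp_mul g _ _ S1 S2) S1

end Core2

/-! ### Decomposition lemmas -/

lemma Edec_lt (g p q : ℕ) (hg2 : 2*g = p + q + 2) (hpq : p + 2 ≤ q) (t : ℤ) :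
    Emat g (p+1) t = 1 + (Matrix.single (⟨p, by omega⟩ : Fin (2*g)) (⟨p+1, by omega⟩ : Fin (2*g)) t
      + Matrix.single (⟨q, by omega⟩ : Fin (2*g)) (⟨q+1, by omega⟩ : Fin (2*g)) t) := by
  ext a b
  have ha : (a:ℕ) < p+q+2 := by have := a.isLt; omega
  have hb : (b:ℕ) < p+q+2 := by have := b.isLt; omega
  simp only [Emat, Matrix.add_apply, Matrix.one_apply, Matrix.single, of_apply, Fin.ext_iff,
    Fin.val_mk]
  rw [show 2*g - (p+1) = q+1 from by omega]
  split_ifs <;> omega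

lemma Edec_eq (p : ℕ) (t : ℤ) :
    Emat (p+1) (p+1) t = 1 + Matrix.single (⟨p, by omega⟩ : Fin (2*(p+1)))
      (⟨p+1, by omega⟩ : Fin (2*(p+1))) t := by
  ext a b
  have ha := a.isLt; have hb := b.isLt
  simp only [Emat, Matrix.add_apply, Matrix.one_apply, Matrix.single, of_apply, Fin.ext_iff,
    Fin.val_mk]
  rw [show 2*(p+1) - (p+1) = p+1 from by omega]
  split_ifs <;> omega

set_option maxHeartbeats 4000000 in
lemma Wdec_lt (g p q : ℕ) (hg2 : 2*g = p + q + 2) (hpq : p + 2 ≤ q) :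
    Wmat g (p+1) = 1
      - (Matrix.single (⟨p, by omega⟩ : Fin (2*g)) (⟨p+1, by omega⟩ : Fin (2*g)) 1
         + Matrix.single (⟨q, by omega⟩ : Fin (2*g)) (⟨q+1, by omega⟩ : Fin (2*g)) 1)
      + (Matrix.single (⟨p+1, by omega⟩ : Fin (2*g)) (⟨p, by omega⟩ : Fin (2*g)) 1
         + Matrix.single (⟨q+1, by omega⟩ : Fin (2*g)) (⟨q, by omega⟩ : Fin (2*g)) 1)
      - (Matrix.single (⟨p, by omega⟩ : Fin (2*g)) (⟨p, by omega⟩ : Fin (2*g)) 1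
         + Matrix.single (⟨q, by omega⟩ : Fin (2*g)) (⟨q, by omega⟩ : Fin (2*g)) 1)
      - (Matrix.single (⟨p+1, by omega⟩ : Fin (2*g)) (⟨p+1, by omega⟩ : Fin (2*g)) 1
         + Matrix.single (⟨q+1, by omega⟩ : Fin (2*g)) (⟨q+1, by omega⟩ : Fin (2*g)) 1) := by
  ext a b
  have ha : (a:ℕ) < p+q+2 := by have := a.isLt; omega
  have hb : (b:ℕ) < p+q+2 := by have := b.isLt; omega
  simp only [Wmat, Matrix.add_apply, Matrix.sub_apply, Matrix.one_apply, Matrix.single,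
    of_apply, Fin.ext_iff, Fin.val_mk]
  rw [show 2*g - (p+1) = q+1 from by omega]
  have ca : (a:ℕ) = p ∨ (a:ℕ) = p+1 ∨ (a:ℕ) = q ∨ (a:ℕ) = q+1 ∨
      ((a:ℕ) ≠ p ∧ (a:ℕ) ≠ p+1 ∧ (a:ℕ) ≠ q ∧ (a:ℕ) ≠ q+1) := by omega
  have cb : (b:ℕ) = p ∨ (b:ℕ) = p+1 ∨ (b:ℕ) = q ∨ (b:ℕ) = q+1 ∨
      ((b:ℕ) ≠ p ∧ (b:ℕ) ≠ p+1 ∧ (b:ℕ) ≠ q ∧ (b:ℕ) ≠ q+1) := by omega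
  have f1 : p ≠ q := by omega
  have f2 : p ≠ q+1 := by omega
  have f3 : p+1 ≠ q := by omega
  have f4 : p+1 ≠ q+1 := by omega
  have f5 : q ≠ p := by omega
  have f6 : q ≠ p+1 := by omega
  have f7 : q+1 ≠ p := by omega
  have f8 : q+1 ≠ p+1 := by omega
  have f9 : q+1+1 ≠ q := by omega
  have f10 : p+1+1 ≠ p := by omega
  have f11 : q+2 ≠ p+1 := by omega
  clear hg2 hpq ha hb
  rcases ca with h|h|h|h|⟨h1,h2,h3,h4⟩ <;> rcases cb with h'|h'|h'|h'|⟨h5,h6,h7,h8⟩ <;>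
    simp_all <;> first | (split_ifs <;> omega) | omega

lemma Wdec_eq (p : ℕ) :
    Wmat (p+1) (p+1) = 1
      - Matrix.single (⟨p, by omega⟩ : Fin (2*(p+1))) (⟨p+1, by omega⟩ : Fin (2*(p+1))) 1
      + Matrix.single (⟨p+1, by omega⟩ : Fin (2*(p+1))) (⟨p, by omega⟩ : Fin (2*(p+1))) 1
      - Matrix.single (⟨p, by omega⟩ : Fin (2*(p+1))) (⟨p, by omega⟩ : Fin (2*(p+1))) 1
      - Matrix.single (⟨p+1, by omega⟩ : Fin (2*(p+1))) (⟨p+1, by omega⟩ : Fin (2*(p+1))) 1 := by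
  ext a b
  have ha := a.isLt; have hb := b.isLt
  simp only [Wmat, Matrix.add_apply, Matrix.sub_apply, Matrix.one_apply, Matrix.single,
    of_apply, Fin.ext_iff, Fin.val_mk]
  rw [show 2*(p+1) - (p+1) = p+1 from by omega]
  split_ifs <;> omega

/-! ### Main theorem -/

theorem elementary_matrices_are_symplectic (g : ℕ) (hg : 1 ≤ g) :
    ∀ t : ℤ, ∀ i : ℕ, 1 ≤ i → i ≤ g →
      (Emat g i t)ᵀ * Jmat g * Emat g i t = Jmat g ∧
        (Wmat g i)ᵀ * Jmat g * Wmat g i = Jmat g := by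
  intro t i hi1 hi2
  rcases eq_or_lt_of_le hi2 with heq | hlt
  · subst heq
    obtain ⟨p, rfl⟩ : ∃ p, i = p + 1 := ⟨i - 1, by omega⟩
    have rx : revF (p+1) (⟨p, by omega⟩ : Fin (2*(p+1))) = ⟨p+1, by omega⟩ := by
      apply Fin.ext; simp [revF]; omega
    have ry : revF (p+1) (⟨p+1, by omega⟩ : Fin (2*(p+1))) = ⟨p, by omega⟩ := by
      apply Fin.ext; simp [revF]; omega
    have nxy : (⟨p, by omega⟩ : Fin (2*(p+1))) ≠ ⟨p+1, by omega⟩ := by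
      simp [Fin.ext_iff]
    constructor
    · rw [Edec_eq p t]
      exact core2E (p+1) _ _ rx nxy.symm t
    · rw [Wdec_eq p]
      exact core2W (p+1) _ _ rx ry nxy
  · obtain ⟨p, rfl⟩ : ∃ p, i = p + 1 := ⟨i - 1, by omega⟩
    obtain ⟨q, hg2, hpq⟩ : ∃ q, 2*g = p + q + 2 ∧ p + 2 ≤ q :=
      ⟨2*g - p - 2, by omega, by omega⟩
    have r1 : revF g (⟨p, by omega⟩ : Fin (2*g)) = ⟨q+1, by omega⟩ := by
      apply Fin.ext; simp [revF]; omega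
    have r2 : revF g (⟨p+1, by omega⟩ : Fin (2*g)) = ⟨q, by omega⟩ := by
      apply Fin.ext; simp [revF]; omega
    have r3 : revF g (⟨q, by omega⟩ : Fin (2*g)) = ⟨p+1, by omega⟩ := by
      apply Fin.ext; simp [revF]; omega
    have r4 : revF g (⟨q+1, by omega⟩ : Fin (2*g)) = ⟨p, by omega⟩ := by
      apply Fin.ext; simp [revF]; omega
    have s3 : ((-1:ℤ))^((⟨q, by omega⟩ : Fin (2*g)):ℕ) = (-1)^((⟨p, by omega⟩ : Fin (2*g)):ℕ) := by
      apply negOnePow_congr; simp; omega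
    have s4 : ((-1:ℤ))^((⟨q+1, by omega⟩ : Fin (2*g)):ℕ)
        = (-1)^((⟨p+1, by omega⟩ : Fin (2*g)):ℕ) := by
      apply negOnePow_congr; simp; omega
    have n12 : (⟨p, by omega⟩ : Fin (2*g)) ≠ ⟨p+1, by omega⟩ := by simp [Fin.ext_iff]
    have n13 : (⟨p, by omega⟩ : Fin (2*g)) ≠ ⟨q, by omega⟩ := by simp [Fin.ext_iff]; omega
    have n14 : (⟨p, by omega⟩ : Fin (2*g)) ≠ ⟨q+1, by omega⟩ := by simp [Fin.ext_iff]; omega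
    have n23 : (⟨p+1, by omega⟩ : Fin (2*g)) ≠ ⟨q, by omega⟩ := by simp [Fin.ext_iff]; omega
    have n24 : (⟨p+1, by omega⟩ : Fin (2*g)) ≠ ⟨q+1, by omega⟩ := by simp [Fin.ext_iff]; omega
    have n34 : (⟨q, by omega⟩ : Fin (2*g)) ≠ ⟨q+1, by omega⟩ := by simp [Fin.ext_iff]
    constructor
    · rw [Edec_lt g p q hg2 hpq t]
      exact core4E g _ _ _ _ r1 r3 s3 n14.symm n34.symm n12.symm n23 t
    · rw [Wdec_lt g p q hg2 hpq]
      exact core4W g _ _ _ _ r1 r2 r3 r4 s3 s4 n12 n13 n14 n23 n24 n34
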